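/- Let G = ⊕_{p∈P}𝔽_p act ergodically on a probability space X, and let q: G × X → S¹ be a phase polynomial of degree < d in the X-variable that is also a cocycle, i.e., q(g+g′,x) = q(g,x)·q(g′,T_g x) for all g,g′ ∈ G and a.e. x. Then for every g ∈ G of order n, the function q(g,·) takes values in C_{n^d}, the group of n^d-th roots of unity. -/

import Mathlib

open MeasureTheory

/-- The multiplicative derivative of `φ` with respect to a transformation `S`. -/
noncomputable def mulDeriv {X U : Type*} [Group U] (S : X → X) (φ : X → U) : X → U :=
  fun x => φ (S x) * (φ x)⁻¹

section Aux

variable {X U : Type*} [CommGroup U]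

lemma mulDeriv_one (S : X → X) : mulDeriv S (1 : X → U) = 1 := by
  funext x; simp [mulDeriv]

lemma mulDeriv_mul (S : X → X) (φ ψ : X → U) :
    mulDeriv S (φ * ψ) = mulDeriv S φ * mulDeriv S ψ := by
  funext x
  simp only [mulDeriv, Pi.mul_apply, mul_inv]
  exact mul_mul_mul_comm _ _ _ _

lemma mulDeriv_inv (S : X → X) (φ : X → U) :
    mulDeriv S φ⁻¹ = (mulDeriv S φ)⁻¹ := by
  funext x; simp [mulDeriv, mul_comm]

lemma foldr_mulDeriv_one (L : List (X → X)) :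
    L.foldr mulDeriv (1 : X → U) = 1 := by
  induction L with
  | nil => rfl
  | cons S L ih => simp [List.foldr, ih, mulDeriv_one]

lemma foldr_mulDeriv_mul (L : List (X → X)) (φ ψ : X → U) :
    L.foldr mulDeriv (φ * ψ) = L.foldr mulDeriv φ * L.foldr mulDeriv ψ := by
  induction L with
  | nil => rfl
  | cons S L ih => simp [List.foldr, ih, mulDeriv_mul]

lemma foldr_mulDeriv_inv (L : List (X → X)) (φ : X → U) :
    L.foldr mulDeriv φ⁻¹ = (L.foldr mulDeriv φ)⁻¹ := by
  induction L with
  | nil => rfl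
  | cons S L ih => simp [List.foldr, ih, mulDeriv_inv]

lemma foldr_mulDeriv_ae_congr [MeasurableSpace X] {μ : Measure X}
    {L : List (X → X)} (hL : ∀ S ∈ L, Measure.QuasiMeasurePreserving S μ μ)
    {φ ψ : X → U} (h : φ =ᵐ[μ] ψ) :
    L.foldr mulDeriv φ =ᵐ[μ] L.foldr mulDeriv ψ := by
  induction L with
  | nil => exact h
  | cons S L ih =>
    have hS : Measure.QuasiMeasurePreserving S μ μ := hL S List.mem_cons_self
    have ih' := ih (fun S' hS' => hL S' (List.mem_cons_of_mem _ hS'))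
    have h1 : (L.foldr mulDeriv φ) ∘ S =ᵐ[μ] (L.foldr mulDeriv ψ) ∘ S :=
      hS.ae_eq_comp ih'
    filter_upwards [ih', h1] with x hx1 hx2
    simp only [List.foldr, mulDeriv]
    rw [hx1, show (L.foldr mulDeriv φ) (S x) = (L.foldr mulDeriv ψ) (S x) from hx2]

end Aux

/-- `φ : X → Circle` is a phase polynomial of degree `< d` with respect to the family
of transformations `T`. -/
def polyDeg {X G : Type*} [MeasurableSpace X] (μ : Measure X) (T : G → X → X) (d : ℕ)
    (φ : X → Circle) : Prop :=
  ∀ h : Fin d → G, ∀ᵐ x ∂μ, (((List.ofFn h).map T).foldr mulDeriv φ) x = 1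

section PolyDeg

variable {X G : Type*} [MeasurableSpace X] {μ : Measure X} {T : G → X → X} {d : ℕ}

lemma polyDeg_one : polyDeg μ T d (1 : X → Circle) := by
  intro h
  filter_upwards with x
  rw [foldr_mulDeriv_one]
  rfl

lemma polyDeg_mul {φ ψ : X → Circle} (hφ : polyDeg μ T d φ) (hψ : polyDeg μ T d ψ) :
    polyDeg μ T d (φ * ψ) := by
  intro h
  filter_upwards [hφ h, hψ h] with x hx1 hx2
  rw [foldr_mulDeriv_mul, Pi.mul_apply, hx1, hx2, mul_one]

lemma polyDeg_inv {φ : X → Circle} (hφ : polyDeg μ T d φ) : polyDeg μ T d φ⁻¹ := by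
  intro h
  filter_upwards [hφ h] with x hx
  rw [foldr_mulDeriv_inv, Pi.inv_apply, hx, inv_one]

lemma polyDeg_ae_congr (hT : ∀ g, Measure.QuasiMeasurePreserving (T g) μ μ)
    {φ ψ : X → Circle} (h : φ =ᵐ[μ] ψ) (hφ : polyDeg μ T d φ) : polyDeg μ T d ψ := by
  intro hh
  have hL : ∀ S ∈ (List.ofFn hh).map T, Measure.QuasiMeasurePreserving S μ μ := by
    intro S hS
    obtain ⟨g, -, rfl⟩ := List.mem_map.mp hS
    exact hT g
  filter_upwards [hφ hh, foldr_mulDeriv_ae_congr hL h] with x hx1 hx2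
  rw [← hx2, hx1]

lemma polyDeg_mulDeriv {φ : X → Circle} (hφ : polyDeg μ T (d + 1) φ) (g : G) :
    polyDeg μ T d (mulDeriv (T g) φ) := by
  intro h
  have key := hφ (Fin.snoc h g)
  have hofn : List.ofFn (Fin.snoc h g : Fin (d + 1) → G) = List.ofFn h ++ [g] := by
    rw [List.ofFn_succ']
    simp [Fin.snoc_castSucc, Fin.snoc_last, List.concat_eq_append]
  rw [hofn, List.map_append, List.foldr_append] at key
  exact key

end PolyDeg

/-- Let `G = ⊕_{p ∈ P} 𝔽_p` act ergodically on a probability space `X`, and let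
`q : G × X → S¹` be a cocycle which is a phase polynomial of degree `< d` in the
`X`-variable.  Then for every `g ∈ G` of order `n`, the function `q(g,·)` takes values
in `C_{n^d}`, the `n^d`-th roots of unity. -/
theorem phasePoly_cocycle_values
    [MeasurableSpace Circle] [BorelSpace Circle]
    (P : Set ℕ) (hP : ∀ p ∈ P, Nat.Prime p)
    {X : Type*} [MeasurableSpace X] (μ : Measure X) [IsProbabilityMeasure μ]
    (T : (Π₀ p : P, ZMod p) → X → X)
    (hmp : ∀ g, MeasurePreserving (T g) μ μ)
    (hT0 : T 0 = id) (hTadd : ∀ g h, T (g + h) = T g ∘ T h)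
    (herg : ∀ f : X → ℂ, Measurable f →
      (∀ g : Π₀ p : P, ZMod p, ∀ᵐ x ∂μ, f (T g x) = f x) → ∃ c : ℂ, ∀ᵐ x ∂μ, f x = c)
    (d : ℕ) (q : (Π₀ p : P, ZMod p) → X → Circle)
    (hqmeas : ∀ g, Measurable (q g))
    (hqpoly : ∀ (g : Π₀ p : P, ZMod p) (h : Fin d → (Π₀ p : P, ZMod p)),
      ∀ᵐ x ∂μ, (((List.ofFn h).map T).foldr mulDeriv (q g)) x = 1)
    (hcocycle : ∀ g g' : Π₀ p : P, ZMod p,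
      ∀ᵐ x ∂μ, q (g + g') x = q g x * q g' (T g x)) :
    ∀ (g : Π₀ p : P, ZMod p) (n : ℕ), addOrderOf g = n →
      ∀ᵐ x ∂μ, (q g x) ^ (n ^ d) = 1 := by
  intro g n hg
  have hqmp : ∀ g', Measure.QuasiMeasurePreserving (T g') μ μ :=
    fun g' => (hmp g').quasiMeasurePreserving
  -- q 0 = 1 a.e.
  have hq0 : ∀ᵐ x ∂μ, q 0 x = 1 := by
    filter_upwards [hcocycle 0 0] with x hx
    rw [add_zero, hT0] at hx
    exact (left_eq_mul.mp hx)
  -- the cocycle identity iterated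
  have hprod : ∀ m : ℕ, ∀ᵐ x ∂μ, q (m • g) x = ∏ j ∈ Finset.range m, q g (T (j • g) x) := by
    intro m
    induction m with
    | zero => simpa using hq0
    | succ m ih =>
      have ihg : ∀ᵐ x ∂μ, q (m • g) (T g x) =
          ∏ j ∈ Finset.range m, q g (T (j • g) (T g x)) := (hqmp g).ae ih
      filter_upwards [hcocycle g (m • g), ihg] with x h1 h2
      have hsm : (m + 1) • g = g + m • g := by
        rw [succ_nsmul, add_comm]
      rw [hsm, h1, h2]
      have hcomp : ∀ j : ℕ, T (j • g) (T g x) = T ((j + 1) • g) x := by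
        intro j
        rw [succ_nsmul, hTadd]
        rfl
      rw [Finset.prod_range_succ']
      simp only [hcomp, zero_nsmul, hT0, id_eq]
      exact mul_comm _ _
  -- the product over a full period is 1 a.e.
  have hng : n • g = 0 := by rw [← hg]; exact addOrderOf_nsmul_eq_zero g
  have hprodn : ∀ᵐ x ∂μ, ∏ j ∈ Finset.range n, q g (T (j • g) x) = 1 := by
    have h1 := hprod n
    rw [hng] at h1
    filter_upwards [h1, hq0] with x hx1 hx2
    rw [← hx1, hx2]
  -- the core induction on the degree
  have core : ∀ d' : ℕ, ∀ φ : X → Circle, polyDeg μ T d' φ →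
      (∀ᵐ x ∂μ, ∏ j ∈ Finset.range n, φ (T (j • g) x) = 1) →
      ∀ᵐ x ∂μ, φ x ^ n ^ d' = 1 := by
    intro d'
    induction d' with
    | zero =>
      intro φ hpoly _
      have := hpoly (fun i => i.elim0)
      simpa using this
    | succ d' ih =>
      intro φ hpoly hprodφ
      set Ψ : X → Circle := ∏ j ∈ Finset.range n, mulDeriv (T (j • g)) φ with hΨ
      have hΨpoly : polyDeg μ T d' Ψ :=
        Finset.prod_induction _ (polyDeg μ T d') (fun a b ha hb => polyDeg_mul ha hb)
          polyDeg_one (fun j _ => polyDeg_mulDeriv hpoly (j • g))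
      have heq : Ψ⁻¹ =ᵐ[μ] (fun x => φ x ^ n) := by
        filter_upwards [hprodφ] with x hx
        have hΨx : Ψ x = ((φ x)⁻¹) ^ n := by
          rw [hΨ]
          rw [Finset.prod_apply]
          simp only [mulDeriv]
          rw [Finset.prod_mul_distrib, hx, one_mul, Finset.prod_const,
            Finset.card_range]
        show (Ψ x)⁻¹ = φ x ^ n
        rw [hΨx, inv_pow, inv_inv]
      have hφnpoly : polyDeg μ T d' (fun x => φ x ^ n) :=
        polyDeg_ae_congr hqmp heq (polyDeg_inv hΨpoly)
      have hφnprod : ∀ᵐ x ∂μ, ∏ j ∈ Finset.range n, (φ (T (j • g) x)) ^ n = 1 := by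
        filter_upwards [hprodφ] with x hx
        rw [Finset.prod_pow, hx, one_pow]
      have := ih (fun x => φ x ^ n) hφnpoly hφnprod
      filter_upwards [this] with x hx
      calc φ x ^ n ^ (d' + 1) = (φ x ^ n) ^ n ^ d' := by
            rw [← pow_mul, pow_succ, mul_comm]
        _ = 1 := hx
  exact core d (q g) (hqpoly g) hprodn
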